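/- arXiv:1809.06699 — 3 statements merged into one kernel-verified Lean document; each statement's English description precedes it below -/
import Mathlib

section
/- Let a point P be uniformly distributed on the annular region S₁ \ S₂, where S₁ is a disk of radius R₁ centered at the origin and S₂ is a disk of radius R₂ centered at a point C with |C| = d, R₂ + d < R₁ (S₂ ⊂ S₁). Let r_T = |P − C| be the distance from P to C. Then r_T has density f(r) = 2r/(R₁² − R₂²) for R₂ ≤ r ≤ R₁ − d, and f(r) = (2r/(π(R₁² − R₂²))) · arccos((d² + r² − R₁²)/(2dr)) for R₁ − d < r ≤ R₁ + d. -/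
open MeasureTheory

section Aux
open Real Set

-- piece 1: lintegral polar coordinates
theorem lintegral_comp_polarCoord_symm' (f : ℝ × ℝ → ENNReal) :
    (∫⁻ p in polarCoord.target, ENNReal.ofReal p.1 * f (polarCoord.symm p)) = ∫⁻ p, f p := by
  set B : ℝ × ℝ → ℝ × ℝ →L[ℝ] ℝ × ℝ := fun p =>
    LinearMap.toContinuousLinearMap (Matrix.toLin (Module.Basis.finTwoProd ℝ) (Module.Basis.finTwoProd ℝ)
      !![Real.cos p.2, -p.1 * Real.sin p.2; Real.sin p.2, p.1 * Real.cos p.2])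
  have A : ∀ p ∈ polarCoord.target, HasFDerivWithinAt polarCoord.symm (B p) polarCoord.target p :=
    fun p _ => (hasFDerivAt_polarCoord_symm p).hasFDerivWithinAt
  have B_det : ∀ p, (B p).det = p.1 := by
    intro p
    conv_rhs => rw [← one_mul p.1, ← cos_sq_add_sin_sq p.2]
    simp only [B, neg_mul, LinearMap.det_toContinuousLinearMap, LinearMap.det_toLin,
      Matrix.det_fin_two_of, sub_neg_eq_add]
    ring
  symm
  calc
    ∫⁻ p, f p = ∫⁻ p in polarCoord.source, f p := by
      rw [← setLIntegral_univ]
      exact setLIntegral_congr polarCoord_source_ae_eq_univ.symm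
    _ = ∫⁻ p in polarCoord.symm '' polarCoord.target, f p := by
      rw [polarCoord.symm_image_target_eq_source]
    _ = ∫⁻ p in polarCoord.target, ENNReal.ofReal |(B p).det| * f (polarCoord.symm p) := by
      exact lintegral_image_eq_lintegral_abs_det_fderiv_mul volume
        polarCoord.open_target.measurableSet A
        (polarCoord.symm.injOn.mono (by rw [OpenPartialHomeomorph.symm_source])) f
    _ = ∫⁻ p in polarCoord.target, ENNReal.ofReal p.1 * f (polarCoord.symm p) := by
      apply setLIntegral_congr_fun polarCoord.open_target.measurableSet
      intro x hx
      dsimp only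
      rw [B_det, abs_of_pos hx.1]

theorem cos_le_iff_arccos_le {t θ : ℝ} (hθ : θ ∈ Ioo (-π) π) :
    Real.cos θ ≤ t ↔ Real.arccos t ≤ |θ| := by
  have habsπ : |θ| < π := abs_lt.2 ⟨hθ.1, hθ.2⟩
  rcases lt_or_ge t (-1) with ht1 | ht1
  · rw [Real.arccos_eq_pi.2 ht1.le]
    constructor
    · intro h; linarith [Real.neg_one_le_cos θ]
    · intro h; linarith
  rcases lt_or_ge 1 t with ht2 | ht2
  · rw [Real.arccos_eq_zero.2 ht2.le]
    constructor
    · intro _; exact abs_nonneg θ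
    · intro _; linarith [Real.cos_le_one θ]
  constructor
  · intro h
    by_contra hc
    push_neg at hc
    have h1 : Real.cos (Real.arccos t) < Real.cos |θ| :=
      Real.strictAntiOn_cos (mem_Icc.2 ⟨abs_nonneg θ, habsπ.le⟩)
        (mem_Icc.2 ⟨Real.arccos_nonneg t, Real.arccos_le_pi t⟩) hc
    rw [Real.cos_arccos ht1 ht2, Real.cos_abs] at h1
    linarith
  · intro h
    have h1 : Real.cos |θ| ≤ Real.cos (Real.arccos t) :=
      Real.cos_le_cos_of_nonneg_of_le_pi (Real.arccos_nonneg t) habsπ.le h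
    rwa [Real.cos_arccos ht1 ht2, Real.cos_abs] at h1

theorem angle_vol (t : ℝ) :
    volume ({θ : ℝ | Real.cos θ ≤ t} ∩ Ioo (-π) π) =
      ENNReal.ofReal (2 * (π - Real.arccos t)) := by
  have ha0 : 0 ≤ Real.arccos t := Real.arccos_nonneg t
  have haπ : Real.arccos t ≤ π := Real.arccos_le_pi t
  have hset : {θ : ℝ | Real.cos θ ≤ t} ∩ Ioo (-π) π
      = Ioo (-π) π \ Ioo (-(Real.arccos t)) (Real.arccos t) := by
    ext θ
    simp only [mem_inter_iff, mem_setOf_eq, mem_diff, mem_Ioo]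
    constructor
    · rintro ⟨hc, hθ⟩
      refine ⟨hθ, fun hmem => ?_⟩
      have := (cos_le_iff_arccos_le hθ).1 hc
      have := abs_lt.2 hmem
      linarith
    · rintro ⟨hθ, hmem⟩
      refine ⟨(cos_le_iff_arccos_le hθ).2 ?_, hθ⟩
      by_contra hc
      push_neg at hc
      exact hmem (abs_lt.1 hc)
  rw [hset, measure_diff (Ioo_subset_Ioo (by linarith) haπ) measurableSet_Ioo.nullMeasurableSet
    (by simp [Real.volume_Ioo]),
    Real.volume_Ioo, Real.volume_Ioo, ← ENNReal.ofReal_sub _ (by linarith)]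
  congr 1
  ring

theorem vol_disk (c R : ℝ) (hR : 0 ≤ R) :
    volume {x : ℝ × ℝ | (x.1 - c) ^ 2 + x.2 ^ 2 ≤ R ^ 2} = ENNReal.ofReal (π * R ^ 2) := by
  have hpre : Complex.measurableEquivRealProd ⁻¹' {x : ℝ × ℝ | (x.1 - c) ^ 2 + x.2 ^ 2 ≤ R ^ 2}
      = Metric.closedBall (c : ℂ) R := by
    ext z
    have hz1 : (Complex.measurableEquivRealProd z).1 = z.re := rfl
    have hz2 : (Complex.measurableEquivRealProd z).2 = z.im := rfl
    have hn : Complex.normSq (z - c) = (z.re - c) ^ 2 + z.im ^ 2 := by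
      simp [Complex.normSq_apply]
      ring
    simp only [mem_preimage, Metric.mem_closedBall, Complex.dist_eq, mem_setOf_eq, hz1, hz2]
    rw [Complex.norm_def, Real.sqrt_le_iff, hn]
    simp [hR]
  have hmeas : MeasurableSet {x : ℝ × ℝ | (x.1 - c) ^ 2 + x.2 ^ 2 ≤ R ^ 2} :=
    measurableSet_le (by fun_prop) measurable_const
  rw [← Complex.volume_preserving_equiv_real_prod.measure_preimage hmeas.nullMeasurableSet,
    hpre, Complex.volume_closedBall, ← ENNReal.ofReal_pow hR]
  rw [show ((NNReal.pi : ENNReal)) = ENNReal.ofReal π by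
    rw [← ENNReal.ofReal_coe_nnreal]; norm_num]
  rw [← ENNReal.ofReal_mul (by positivity), mul_comm]

end Aux

open Real Set in
/-- For `P` uniform on `S₁ \ S₂` (disk of radius `R₁` at the origin minus
disk of radius `R₂` at `C = (d,0)`, with `R₂ + d < R₁`), the distance `r_T = |P − C|`
has density `2r/(R₁²−R₂²)` on `[R₂, R₁−d]` and
`(2r/(π(R₁²−R₂²)))·arccos((d²+r²−R₁²)/(2dr))` on `(R₁−d, R₁+d]`. -/
theorem stmt9 (R₁ R₂ d : ℝ) (hR₂ : 0 < R₂) (hd : 0 < d) (hsub : R₂ + d < R₁)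
    (A : Set (ℝ × ℝ))
    (hA : A = {x : ℝ × ℝ | x.1 ^ 2 + x.2 ^ 2 ≤ R₁ ^ 2} \
              {x : ℝ × ℝ | (x.1 - d) ^ 2 + x.2 ^ 2 ≤ R₂ ^ 2})
    (P : Measure (ℝ × ℝ)) (hP : P = (volume A)⁻¹ • volume.restrict A) :
    P.map (fun x => Real.sqrt ((x.1 - d) ^ 2 + x.2 ^ 2)) = volume.withDensity (fun r =>
      ENNReal.ofReal (
        if R₂ ≤ r ∧ r ≤ R₁ - d then 2 * r / (R₁ ^ 2 - R₂ ^ 2)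
        else if R₁ - d < r ∧ r ≤ R₁ + d then
          2 * r / (Real.pi * (R₁ ^ 2 - R₂ ^ 2)) *
            Real.arccos ((d ^ 2 + r ^ 2 - R₁ ^ 2) / (2 * d * r))
        else 0)) := by
  have hK : (0:ℝ) < R₁ ^ 2 - R₂ ^ 2 := by nlinarith
  have hC : (0:ℝ) < π * (R₁ ^ 2 - R₂ ^ 2) := by positivity
  set C : ℝ := π * (R₁ ^ 2 - R₂ ^ 2) with hCdef
  set F : ℝ → ENNReal := fun r =>
      ENNReal.ofReal (
        if R₂ ≤ r ∧ r ≤ R₁ - d then 2 * r / (R₁ ^ 2 - R₂ ^ 2)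
        else if R₁ - d < r ∧ r ≤ R₁ + d then
          2 * r / (Real.pi * (R₁ ^ 2 - R₂ ^ 2)) *
            Real.arccos ((d ^ 2 + r ^ 2 - R₁ ^ 2) / (2 * d * r))
        else 0) with hFdef
  set f : ℝ × ℝ → ℝ := fun x => Real.sqrt ((x.1 - d) ^ 2 + x.2 ^ 2) with hfdef
  have hf : Measurable f := by fun_prop
  have hmeasA : MeasurableSet A := by
    rw [hA]
    exact (measurableSet_le (by fun_prop) measurable_const).diff
      (measurableSet_le (by fun_prop) measurable_const)
  -- total volume of A
  have hvolA : volume A = ENNReal.ofReal C := by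
    have hsubset : {x : ℝ × ℝ | (x.1 - d) ^ 2 + x.2 ^ 2 ≤ R₂ ^ 2} ⊆
        {x : ℝ × ℝ | x.1 ^ 2 + x.2 ^ 2 ≤ R₁ ^ 2} := by
      intro x hx
      simp only [mem_setOf_eq] at hx ⊢
      have h1 : x.1 ≤ R₂ + d := by nlinarith [sq_nonneg (x.1 - d - R₂), sq_nonneg x.2]
      nlinarith [hx, h1, hd, hR₂, hsub]
    have h1 : volume {x : ℝ × ℝ | x.1 ^ 2 + x.2 ^ 2 ≤ R₁ ^ 2} = ENNReal.ofReal (π * R₁ ^ 2) := by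
      rw [show {x : ℝ × ℝ | x.1 ^ 2 + x.2 ^ 2 ≤ R₁ ^ 2}
          = {x : ℝ × ℝ | (x.1 - 0) ^ 2 + x.2 ^ 2 ≤ R₁ ^ 2} by simp]
      exact vol_disk 0 R₁ (by linarith)
    have h2 : volume {x : ℝ × ℝ | (x.1 - d) ^ 2 + x.2 ^ 2 ≤ R₂ ^ 2}
        = ENNReal.ofReal (π * R₂ ^ 2) := vol_disk d R₂ hR₂.le
    rw [hA, measure_diff hsubset
      (measurableSet_le (by fun_prop) measurable_const).nullMeasurableSet
      (by rw [h2]; exact ENNReal.ofReal_ne_top), h1, h2,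
      ← ENNReal.ofReal_sub _ (by positivity)]
    congr 1
    ring
  -- the key volume computation
  have hkey : ∀ s : Set ℝ, MeasurableSet s →
      volume (A ∩ f ⁻¹' s) = ∫⁻ r in s, ENNReal.ofReal C * F r := by
    intro s hs
    classical
    set E : Set (ℝ × ℝ) := {x : ℝ × ℝ | ((x.1 + d) ^ 2 + x.2 ^ 2 ≤ R₁ ^ 2 ∧
        ¬(x.1 ^ 2 + x.2 ^ 2 ≤ R₂ ^ 2)) ∧ Real.sqrt (x.1 ^ 2 + x.2 ^ 2) ∈ s} with hEdef
    have hE : MeasurableSet E := by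
      have : E = ({x : ℝ × ℝ | (x.1 + d) ^ 2 + x.2 ^ 2 ≤ R₁ ^ 2} ∩
          {x : ℝ × ℝ | x.1 ^ 2 + x.2 ^ 2 ≤ R₂ ^ 2}ᶜ) ∩
          ((fun x : ℝ × ℝ => Real.sqrt (x.1 ^ 2 + x.2 ^ 2)) ⁻¹' s) := by
        ext x
        simp only [hEdef, mem_inter_iff, mem_setOf_eq, mem_compl_iff, mem_preimage]
      rw [this]
      exact ((measurableSet_le (by fun_prop) measurable_const).inter
        (measurableSet_le (by fun_prop) measurable_const).compl).inter
        ((by fun_prop : Measurable fun x : ℝ × ℝ => Real.sqrt (x.1 ^ 2 + x.2 ^ 2)) hs)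
    have hsymm : Measurable (polarCoord.symm : ℝ × ℝ → ℝ × ℝ) := by
      have h1 : (polarCoord.symm : ℝ × ℝ → ℝ × ℝ)
          = fun p : ℝ × ℝ => (p.1 * Real.cos p.2, p.1 * Real.sin p.2) := by
        funext p
        exact polarCoord_symm_apply p
      rw [h1]; fun_prop
    have hGmeas : Measurable fun p : ℝ × ℝ =>
        ENNReal.ofReal p.1 * E.indicator 1 (polarCoord.symm p) :=
      measurable_fst.ennreal_ofReal.mul ((measurable_one.indicator hE).comp hsymm)
    set G : ℝ → ENNReal := fun r => if R₂ < r then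
        ENNReal.ofReal r *
          ENNReal.ofReal (2 * (π - Real.arccos ((R₁ ^ 2 - d ^ 2 - r ^ 2) / (2 * d * r)))) else 0
      with hGdef
    -- step 1: translation
    have hstep1 : volume (A ∩ f ⁻¹' s) = volume E := by
      have hTset : (fun x : ℝ × ℝ => x + ((d, 0) : ℝ × ℝ)) ⁻¹' (A ∩ f ⁻¹' s) = E := by
        ext x
        simp only [hEdef, hA, hfdef, mem_preimage, mem_inter_iff, mem_diff, mem_setOf_eq,
          Prod.fst_add, Prod.snd_add, add_zero, add_sub_cancel_right]
      rw [← hTset,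
        (measurePreserving_add_right volume ((d, 0) : ℝ × ℝ)).measure_preimage
          ((hmeasA.inter (hf hs)).nullMeasurableSet)]
    rw [hstep1, ← lintegral_indicator_one hE, ← lintegral_comp_polarCoord_symm',
      polarCoord_target, Measure.volume_eq_prod, ← Measure.prod_restrict,
      lintegral_prod _ hGmeas.aemeasurable]
    -- step: inner integral
    have hinner : ∀ r ∈ Ioi (0:ℝ),
        (∫⁻ θ in Ioo (-π) π, ENNReal.ofReal (r, θ).1 * E.indicator 1 (polarCoord.symm (r, θ)))
          = s.indicator G r := by
      intro r hr
      rw [mem_Ioi] at hr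
      have hrint : ∀ θ : ℝ, polarCoord.symm (r, θ) = (r * Real.cos θ, r * Real.sin θ) :=
        fun θ => polarCoord_symm_apply (r, θ)
      have hsq : ∀ θ : ℝ, (r * Real.cos θ) ^ 2 + (r * Real.sin θ) ^ 2 = r ^ 2 := by
        intro θ
        have := Real.sin_sq_add_cos_sq θ
        nlinarith [this]
      have hsqrt : ∀ θ : ℝ, Real.sqrt ((r * Real.cos θ) ^ 2 + (r * Real.sin θ) ^ 2) = r := by
        intro θ
        rw [hsq θ, Real.sqrt_sq hr.le]
      by_cases hrs : r ∈ s ∧ R₂ < r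
      · set t : ℝ := (R₁ ^ 2 - d ^ 2 - r ^ 2) / (2 * d * r) with htdef
        have hmeas_t : MeasurableSet {θ : ℝ | Real.cos θ ≤ t} :=
          measurableSet_le Real.continuous_cos.measurable measurable_const
        have hmem : ∀ θ : ℝ, (((r * Real.cos θ, r * Real.sin θ) : ℝ × ℝ) ∈ E) ↔
            Real.cos θ ≤ t := by
          intro θ
          simp only [hEdef, mem_setOf_eq, hsq θ, Real.sqrt_sq hr.le]
          have h1 : (r * Real.cos θ + d) ^ 2 + (r * Real.sin θ) ^ 2
              = r ^ 2 + 2 * d * r * Real.cos θ + d ^ 2 := by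
            nlinarith [Real.sin_sq_add_cos_sq θ]
          have h2 : ¬(r ^ 2 ≤ R₂ ^ 2) := by
            push_neg
            nlinarith [hrs.2]
          rw [h1]
          constructor
          · rintro ⟨⟨ha, -⟩, -⟩
            rw [htdef, le_div_iff₀ (by positivity)]
            linarith
          · intro hct
            rw [htdef, le_div_iff₀ (by positivity)] at hct
            exact ⟨⟨by linarith, h2⟩, hrs.1⟩
        have hcond : ∀ θ : ℝ, E.indicator (1 : ℝ × ℝ → ENNReal) (r * Real.cos θ, r * Real.sin θ)
            = ({θ : ℝ | Real.cos θ ≤ t}).indicator (1 : ℝ → ENNReal) θ := by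
          intro θ
          by_cases hct : Real.cos θ ≤ t
          · rw [Set.indicator_of_mem ((hmem θ).2 hct), Set.indicator_of_mem (by exact hct)]
            rfl
          · rw [Set.indicator_of_notMem (fun hm => hct ((hmem θ).1 hm)),
              Set.indicator_of_notMem (by exact hct)]
        calc (∫⁻ θ in Ioo (-π) π,
              ENNReal.ofReal (r, θ).1 * E.indicator 1 (polarCoord.symm (r, θ)))
            = ∫⁻ θ in Ioo (-π) π, ENNReal.ofReal r *
                ({θ : ℝ | Real.cos θ ≤ t}).indicator (1 : ℝ → ENNReal) θ := by
              apply lintegral_congr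
              intro θ
              rw [hrint θ, hcond θ]
          _ = ENNReal.ofReal r *
                ∫⁻ θ in Ioo (-π) π, ({θ : ℝ | Real.cos θ ≤ t}).indicator (1 : ℝ → ENNReal) θ := by
              rw [lintegral_const_mul' _ _ ENNReal.ofReal_ne_top]
          _ = ENNReal.ofReal r * volume ({θ : ℝ | Real.cos θ ≤ t} ∩ Ioo (-π) π) := by
              rw [lintegral_indicator_one hmeas_t, Measure.restrict_apply hmeas_t]
          _ = s.indicator G r := by
              rw [angle_vol t, Set.indicator_of_mem hrs.1]
              simp only [hGdef]
              rw [if_pos hrs.2]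
      · have hzero : ∀ θ : ℝ,
            E.indicator (1 : ℝ × ℝ → ENNReal) (r * Real.cos θ, r * Real.sin θ) = 0 := by
          intro θ
          apply Set.indicator_of_notMem
          intro hmem
          simp only [hEdef, mem_setOf_eq, hsq θ, Real.sqrt_sq hr.le] at hmem
          obtain ⟨⟨-, h2⟩, h3⟩ := hmem
          apply hrs
          refine ⟨h3, ?_⟩
          by_contra hR
          push_neg at hR
          exact h2 (by nlinarith)
        have hz : ∀ θ ∈ Ioo (-π) π,
            ENNReal.ofReal (r, θ).1 * E.indicator 1 (polarCoord.symm (r, θ)) = 0 := by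
          intro θ _
          rw [hrint θ, hzero θ, mul_zero]
        rw [setLIntegral_congr_fun measurableSet_Ioo hz, lintegral_zero]
        symm
        rw [Set.indicator_apply]
        split_ifs with h
        · simp only [hGdef]
          rw [if_neg (fun hlt => hrs ⟨h, hlt⟩)]
        · rfl
    rw [setLIntegral_congr_fun measurableSet_Ioi
      (fun r hr => hinner r hr)]
    -- pointwise identification of the density
    have hptwise : ∀ r : ℝ, r ≠ R₂ → G r = ENNReal.ofReal C * F r := by
      intro r hrne
      by_cases hr2 : R₂ < r
      · have hr0 : 0 < r := hR₂.trans hr2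
        set t : ℝ := (R₁ ^ 2 - d ^ 2 - r ^ 2) / (2 * d * r) with htdef
        simp only [hGdef, hFdef, if_pos hr2]
        rw [← ENNReal.ofReal_mul hr0.le]
        rcases le_or_gt r (R₁ - d) with hle | hgt
        · have ht1 : 1 ≤ t := by
            rw [htdef, one_le_div (by positivity)]
            nlinarith
          rw [Real.arccos_eq_zero.2 ht1, if_pos ⟨hr2.le, hle⟩, ← ENNReal.ofReal_mul hC.le]
          congr 1
          rw [hCdef]
          field_simp
          ring
        · rcases le_or_gt r (R₁ + d) with hle2 | hgt2
          · have htneg : (d ^ 2 + r ^ 2 - R₁ ^ 2) / (2 * d * r) = -t := by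
              rw [htdef]; ring
            rw [if_neg (fun h => absurd h.2 (by linarith)), if_pos ⟨hgt, hle2⟩, htneg,
              Real.arccos_neg, ← ENNReal.ofReal_mul hC.le]
            congr 1
            rw [hCdef]
            generalize Real.arccos t = a
            field_simp
          · have ht1 : t ≤ -1 := by
              rw [htdef, div_le_iff₀ (by positivity)]
              nlinarith
            rw [Real.arccos_eq_pi.2 ht1,
              if_neg (fun h => absurd h.2 (by linarith)),
              if_neg (fun h => absurd h.2 (by linarith))]
            simp
      · have hrlt : r < R₂ := lt_of_le_of_ne (not_lt.1 hr2) hrne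
        simp only [hGdef, hFdef, if_neg hr2]
        rw [if_neg (fun h => absurd h.1 (by linarith)),
          if_neg (fun h => absurd h.1 (by linarith))]
        simp
    have h0 : ∀ᵐ r : ℝ ∂volume, r ≠ R₂ := by
      rw [ae_iff]
      have hset : {r : ℝ | ¬ r ≠ R₂} = {R₂} := by
        ext r
        simp [not_not]
      rw [hset]
      exact measure_singleton R₂
    have hae : (fun r => s.indicator G r)
        =ᵐ[volume] fun r => s.indicator (fun r => ENNReal.ofReal C * F r) r := by
      filter_upwards [h0] with r hr
      by_cases hrs : r ∈ s
      · rw [Set.indicator_of_mem hrs, Set.indicator_of_mem hrs, hptwise r hr]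
      · rw [Set.indicator_of_notMem hrs, Set.indicator_of_notMem hrs]
    rw [lintegral_congr_ae (ae_restrict_of_ae hae),
      lintegral_indicator hs, Measure.restrict_restrict hs]
    have hCF0 : ∀ r : ℝ, r ∉ Ioi (0:ℝ) → ENNReal.ofReal C * F r = 0 := by
      intro r hr
      rw [mem_Ioi, not_lt] at hr
      have hF : F r = 0 := by
        simp only [hFdef]
        rw [if_neg (fun h => absurd h.1 (by linarith)),
          if_neg (fun h => absurd h.1 (by linarith))]
        simp
      rw [hF, mul_zero]
    rw [inter_comm, ← Measure.restrict_restrict measurableSet_Ioi,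
      ← lintegral_indicator measurableSet_Ioi]
    apply lintegral_congr
    intro r
    rw [Set.indicator_apply]
    split_ifs with h
    · rfl
    · exact (hCF0 r h).symm
  -- conclude
  subst hP
  ext s hs
  rw [Measure.map_apply hf hs, Measure.smul_apply, smul_eq_mul,
    Measure.restrict_apply (hf hs), inter_comm, hkey s hs, hvolA,
    lintegral_const_mul' _ _ ENNReal.ofReal_ne_top, ← mul_assoc,
    ENNReal.inv_mul_cancel (ENNReal.ofReal_pos.2 hC).ne' ENNReal.ofReal_ne_top, one_mul,
    withDensity_apply _ hs]
end

section
/- With P uniform on the annulus-with-offset-hole region S₁ \ S₂ as above and ABS at height h above C, the 3-D distance Z_c = √(|P − C|² + h²) from P to the ABS has density f(z) = 2z/(R₁² − R₂²) for √(R₂² + h²) ≤ z ≤ √((R₁ − d)² + h²), and f(z) = (2z/(π(R₁² − R₂²))) · arcsec(2d√(z² − h²)/(d² + z² − h² − R₁²)) for √((R₁ − d)² + h²) < z ≤ √((R₁ + d)² + h²). -/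
open MeasureTheory Set Real

theorem my_lintegral_polar (g : ℝ × ℝ → ENNReal) :
    ∫⁻ p in polarCoord.target, ENNReal.ofReal p.1 * g (polarCoord.symm p) = ∫⁻ p, g p := by
  set B : ℝ × ℝ → ℝ × ℝ →L[ℝ] ℝ × ℝ := fun p =>
    LinearMap.toContinuousLinearMap (Matrix.toLin (Module.Basis.finTwoProd ℝ) (Module.Basis.finTwoProd ℝ)
      !![Real.cos p.2, -p.1 * Real.sin p.2; Real.sin p.2, p.1 * Real.cos p.2])
  have A : ∀ p ∈ polarCoord.target, HasFDerivWithinAt polarCoord.symm (B p) polarCoord.target p :=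
    fun p _ => (hasFDerivAt_polarCoord_symm p).hasFDerivWithinAt
  have B_det : ∀ p, (B p).det = p.1 := by
    intro p
    conv_rhs => rw [← one_mul p.1, ← Real.cos_sq_add_sin_sq p.2]
    simp only [B, neg_mul, LinearMap.det_toContinuousLinearMap, LinearMap.det_toLin,
      Matrix.det_fin_two_of, sub_neg_eq_add]
    ring
  have h1 : ∫⁻ p, g p = ∫⁻ p in polarCoord.source, g p := by
    rw [← setLIntegral_univ]
    exact (setLIntegral_congr polarCoord_source_ae_eq_univ).symm
  have hinj : InjOn polarCoord.symm polarCoord.target := polarCoord.symm.injOn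
  rw [h1, ← polarCoord.symm_image_target_eq_source,
    lintegral_image_eq_lintegral_abs_det_fderiv_mul volume polarCoord.open_target.measurableSet
      A hinj g]
  apply setLIntegral_congr_fun_ae polarCoord.open_target.measurableSet
  apply ae_of_all
  intro p hp
  rw [B_det, abs_of_pos]
  rw [polarCoord_target] at hp
  exact hp.1

theorem arc_set (u : ℝ) :
    {θ : ℝ | θ ∈ Ioo (-π) π ∧ u < Real.cos θ} = Ioo (-Real.arccos u) (Real.arccos u) := by
  ext θ
  simp only [mem_setOf_eq, mem_Ioo, ← abs_lt]
  constructor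
  · rintro ⟨hθ, hu⟩
    rcases le_or_gt (-1) u with h1 | h1
    · have hu1 : u ≤ 1 := le_of_lt (lt_of_lt_of_le hu (Real.cos_le_one θ))
      have : |θ| = Real.arccos (Real.cos θ) := by
        rw [← Real.cos_abs θ, Real.arccos_cos (abs_nonneg θ) hθ.le]
      rw [this]
      exact Real.strictAntiOn_arccos ⟨h1, hu1⟩ ⟨Real.neg_one_le_cos θ, Real.cos_le_one θ⟩ hu
    · rw [Real.arccos_eq_pi.2 (le_of_lt h1)]
      exact hθ
  · intro hθ
    have hθπ : |θ| < π := lt_of_lt_of_le hθ (Real.arccos_le_pi u)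
    refine ⟨hθπ, ?_⟩
    have hc : Real.cos (Real.arccos u) < Real.cos |θ| := by
      apply Real.strictAntiOn_cos ⟨abs_nonneg θ, le_of_lt hθπ⟩
        ⟨Real.arccos_nonneg u, Real.arccos_le_pi u⟩ hθ
    rw [Real.cos_abs] at hc
    rcases le_or_gt u (-1) with h1 | h1
    · calc u ≤ -1 := h1
        _ ≤ Real.cos (Real.arccos u) := Real.neg_one_le_cos _
        _ < _ := hc
    rcases le_or_gt u 1 with h2 | h2
    · rw [Real.cos_arccos (le_of_lt h1) h2] at hc; exact hc
    · exfalso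
      rw [Real.arccos_eq_zero.2 (le_of_lt h2)] at hθ
      simpa using lt_of_le_of_lt (abs_nonneg θ) hθ

theorem arc_meas (u : ℝ) :
    volume {θ : ℝ | θ ∈ Ioo (-π) π ∧ Real.cos θ ≤ u} = ENNReal.ofReal (2 * Real.arccos (-u)) := by
  have hsub : Ioo (-Real.arccos u) (Real.arccos u) ⊆ Ioo (-π) π := by
    apply Ioo_subset_Ioo (neg_le_neg (Real.arccos_le_pi u)) (Real.arccos_le_pi u)
  have hset : {θ : ℝ | θ ∈ Ioo (-π) π ∧ Real.cos θ ≤ u}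
      = Ioo (-π) π \ Ioo (-Real.arccos u) (Real.arccos u) := by
    rw [← arc_set u]
    ext θ; simp only [mem_setOf_eq, mem_diff, not_and, not_lt]; tauto
  rw [hset, measure_diff hsub measurableSet_Ioo.nullMeasurableSet
    (by rw [Real.volume_Ioo]; exact ENNReal.ofReal_ne_top),
    Real.volume_Ioo, Real.volume_Ioo]
  rw [← ENNReal.ofReal_sub _ (by linarith [Real.arccos_nonneg u] : (0:ℝ) ≤ Real.arccos u - -Real.arccos u)]
  congr 1
  rw [Real.arccos_neg]
  ring

theorem core_vol (R₁ d : ℝ) (hd : 0 < d) (s r : ℝ) (hs : 0 ≤ s) (hsr : s ≤ r) :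
    volume {p : ℝ × ℝ | s ^ 2 < (p.1 - d) ^ 2 + p.2 ^ 2 ∧ (p.1 - d) ^ 2 + p.2 ^ 2 ≤ r ^ 2
        ∧ p.1 ^ 2 + p.2 ^ 2 ≤ R₁ ^ 2}
      = ENNReal.ofReal (∫ ρ in s..r,
          2 * ρ * Real.arccos ((d ^ 2 + ρ ^ 2 - R₁ ^ 2) / (2 * d * ρ))) := by
  have hr : 0 ≤ r := hs.trans hsr
  set T : Set (ℝ × ℝ) := {q : ℝ × ℝ | s ^ 2 < q.1 ^ 2 + q.2 ^ 2 ∧ q.1 ^ 2 + q.2 ^ 2 ≤ r ^ 2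
      ∧ (q.1 + d) ^ 2 + q.2 ^ 2 ≤ R₁ ^ 2} with hTdef
  have hc1 : Measurable fun q : ℝ × ℝ => q.1 ^ 2 + q.2 ^ 2 := by fun_prop
  have hc2 : Measurable fun q : ℝ × ℝ => (q.1 + d) ^ 2 + q.2 ^ 2 := by fun_prop
  have hT : MeasurableSet T :=
    (measurableSet_lt measurable_const hc1).inter
      ((measurableSet_le hc1 measurable_const).inter (measurableSet_le hc2 measurable_const))
  have hST : {p : ℝ × ℝ | s ^ 2 < (p.1 - d) ^ 2 + p.2 ^ 2 ∧ (p.1 - d) ^ 2 + p.2 ^ 2 ≤ r ^ 2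
      ∧ p.1 ^ 2 + p.2 ^ 2 ≤ R₁ ^ 2} = (fun p : ℝ × ℝ => p + (-d, 0)) ⁻¹' T := by
    ext p
    have e1 : (p.1 + -d) ^ 2 + (p.2 + 0) ^ 2 = (p.1 - d) ^ 2 + p.2 ^ 2 := by ring
    have e2 : (p.1 + -d + d) ^ 2 + (p.2 + 0) ^ 2 = p.1 ^ 2 + p.2 ^ 2 := by ring
    simp only [hTdef, mem_preimage, mem_setOf_eq, Prod.fst_add, Prod.snd_add, e1, e2]
  rw [hST, (measurePreserving_add_right volume ((-d, 0) : ℝ × ℝ)).measure_preimage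
    hT.nullMeasurableSet]
  rw [← lintegral_indicator_one hT, ← my_lintegral_polar]
  have hψ : (polarCoord.symm : ℝ × ℝ → ℝ × ℝ)
      = fun p : ℝ × ℝ => (p.1 * Real.cos p.2, p.1 * Real.sin p.2) := by
    funext p; exact polarCoord_symm_apply p
  have hmeas : Measurable fun p : ℝ × ℝ =>
      ENNReal.ofReal p.1 * T.indicator 1 (polarCoord.symm p) := by
    apply Measurable.mul
    · exact measurable_fst.ennreal_ofReal
    · apply (measurable_one.indicator hT).comp
      rw [hψ]; fun_prop
  rw [polarCoord_target, Measure.volume_eq_prod, ← Measure.prod_restrict,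
    lintegral_prod _ hmeas.aemeasurable]
  have key : ∀ ρ ∈ Ioi (0:ℝ),
      (∫⁻ θ in Ioo (-π) π, ENNReal.ofReal ρ * T.indicator 1 (polarCoord.symm (ρ, θ)))
      = (Ioc s r).indicator (fun ρ =>
          ENNReal.ofReal (2 * ρ * Real.arccos ((d ^ 2 + ρ ^ 2 - R₁ ^ 2) / (2 * d * ρ)))) ρ := by
    intro ρ hρ
    rw [mem_Ioi] at hρ
    have hmem : ∀ θ : ℝ, polarCoord.symm (ρ, θ) ∈ T ↔
        (s < ρ ∧ ρ ≤ r) ∧ Real.cos θ ≤ (R₁ ^ 2 - d ^ 2 - ρ ^ 2) / (2 * d * ρ) := by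
      intro θ
      have hsc := Real.sin_sq_add_cos_sq θ
      have hx1 : (ρ * Real.cos θ) ^ 2 + (ρ * Real.sin θ) ^ 2 = ρ ^ 2 := by
        linear_combination ρ ^ 2 * hsc
      have hx2 : (ρ * Real.cos θ + d) ^ 2 + (ρ * Real.sin θ) ^ 2
          = ρ ^ 2 + 2 * d * ρ * Real.cos θ + d ^ 2 := by linear_combination ρ ^ 2 * hsc
      rw [hψ]
      simp only [hTdef, mem_setOf_eq, hx1, hx2]
      constructor
      · rintro ⟨h1, h2, h3⟩
        refine ⟨⟨by nlinarith, by nlinarith⟩, ?_⟩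
        rw [le_div_iff₀ (by positivity)]
        nlinarith
      · rintro ⟨⟨h1, h2⟩, h3⟩
        rw [le_div_iff₀ (by positivity)] at h3
        refine ⟨by nlinarith, by nlinarith, by nlinarith⟩
    by_cases hρ2 : s < ρ ∧ ρ ≤ r
    · have hcong : ∀ θ : ℝ, ENNReal.ofReal ρ * T.indicator 1 (polarCoord.symm (ρ, θ))
          = ENNReal.ofReal ρ *
            {θ : ℝ | Real.cos θ ≤ (R₁ ^ 2 - d ^ 2 - ρ ^ 2) / (2 * d * ρ)}.indicator 1 θ := by
        intro θ
        congr 1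
        simp only [Set.indicator_apply, mem_setOf_eq, hmem θ, hρ2, true_and, Pi.one_apply]
      simp_rw [hcong]
      rw [lintegral_const_mul' _ _ ENNReal.ofReal_ne_top,
        lintegral_indicator_one (measurableSet_le Real.measurable_cos measurable_const),
        Measure.restrict_apply (measurableSet_le Real.measurable_cos measurable_const)]
      have : {θ : ℝ | Real.cos θ ≤ (R₁ ^ 2 - d ^ 2 - ρ ^ 2) / (2 * d * ρ)} ∩ Ioo (-π) π
          = {θ : ℝ | θ ∈ Ioo (-π) π ∧ Real.cos θ ≤ (R₁ ^ 2 - d ^ 2 - ρ ^ 2) / (2 * d * ρ)} := by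
        ext θ; simp only [mem_inter_iff, mem_setOf_eq]; tauto
      rw [this, arc_meas, Set.indicator_of_mem (by exact hρ2 : ρ ∈ Ioc s r),
        ← ENNReal.ofReal_mul hρ.le]
      have harg : -((R₁ ^ 2 - d ^ 2 - ρ ^ 2) / (2 * d * ρ))
          = (d ^ 2 + ρ ^ 2 - R₁ ^ 2) / (2 * d * ρ) := by ring
      rw [harg]
      congr 1
      ring
    · have hcong : ∀ θ : ℝ, ENNReal.ofReal ρ * T.indicator 1 (polarCoord.symm (ρ, θ)) = 0 := by
        intro θ
        have : polarCoord.symm (ρ, θ) ∉ T := fun hmem' => hρ2 ((hmem θ).1 hmem').1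
        rw [Set.indicator_of_notMem this, mul_zero]
      simp_rw [hcong]
      rw [lintegral_zero, Set.indicator_of_notMem (by simpa [Set.mem_Ioc] using hρ2)]
  rw [setLIntegral_congr_fun_ae measurableSet_Ioi (ae_of_all _ key)]
  have hsub2 : Ioc s r ⊆ Ioi 0 := fun x hx => lt_of_le_of_lt hs hx.1
  rw [lintegral_indicator measurableSet_Ioc, Measure.restrict_restrict measurableSet_Ioc,
    Set.inter_eq_left.2 hsub2]
  rw [← ofReal_integral_eq_lintegral_ofReal]
  · rw [intervalIntegral.integral_of_le hsr]
  · apply Measure.integrableOn_of_bounded (M := 2 * r * π) measure_Ioc_lt_top.ne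
    · apply Measurable.aestronglyMeasurable
      apply Measurable.mul (by fun_prop)
      exact Real.continuous_arccos.measurable.comp (by fun_prop)
    · filter_upwards [ae_restrict_mem measurableSet_Ioc] with ρ hρ
      have hρ0 : 0 < ρ := hs.trans_lt hρ.1
      rw [Real.norm_eq_abs,
        abs_of_nonneg (mul_nonneg (by positivity) (Real.arccos_nonneg _))]
      have h1 : Real.arccos ((d ^ 2 + ρ ^ 2 - R₁ ^ 2) / (2 * d * ρ)) ≤ π := Real.arccos_le_pi _
      have h2 : 0 ≤ Real.arccos ((d ^ 2 + ρ ^ 2 - R₁ ^ 2) / (2 * d * ρ)) := Real.arccos_nonneg _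
      nlinarith [hρ.1, hρ.2, hs.trans hρ.1.le]
  · filter_upwards [ae_restrict_mem measurableSet_Ioc] with ρ hρ
    have hρ0 : 0 < ρ := hs.trans_lt hρ.1
    exact mul_nonneg (by positivity) (Real.arccos_nonneg _)

theorem disk_vol (R : ℝ) (hR : 0 ≤ R) :
    volume {p : ℝ × ℝ | p.1 ^ 2 + p.2 ^ 2 ≤ R ^ 2} = ENNReal.ofReal (π * R ^ 2) := by
  set T : Set (ℝ × ℝ) := {p : ℝ × ℝ | p.1 ^ 2 + p.2 ^ 2 ≤ R ^ 2} with hTdef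
  have hc1 : Measurable fun q : ℝ × ℝ => q.1 ^ 2 + q.2 ^ 2 := by fun_prop
  have hT : MeasurableSet T := measurableSet_le hc1 measurable_const
  have hψ : (polarCoord.symm : ℝ × ℝ → ℝ × ℝ)
      = fun p : ℝ × ℝ => (p.1 * Real.cos p.2, p.1 * Real.sin p.2) := by
    funext p; exact polarCoord_symm_apply p
  have hmeas : Measurable fun p : ℝ × ℝ =>
      ENNReal.ofReal p.1 * T.indicator 1 (polarCoord.symm p) := by
    apply Measurable.mul
    · exact measurable_fst.ennreal_ofReal
    · apply (measurable_one.indicator hT).comp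
      rw [hψ]; fun_prop
  rw [← lintegral_indicator_one hT, ← my_lintegral_polar]
  rw [polarCoord_target, Measure.volume_eq_prod, ← Measure.prod_restrict,
    lintegral_prod _ hmeas.aemeasurable]
  have key : ∀ ρ ∈ Ioi (0:ℝ),
      (∫⁻ θ in Ioo (-π) π, ENNReal.ofReal ρ * T.indicator 1 (polarCoord.symm (ρ, θ)))
      = (Ioc 0 R).indicator (fun ρ => ENNReal.ofReal (2 * π * ρ)) ρ := by
    intro ρ hρ
    rw [mem_Ioi] at hρ
    have hmem : ∀ θ : ℝ, polarCoord.symm (ρ, θ) ∈ T ↔ ρ ≤ R := by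
      intro θ
      have hsc := Real.sin_sq_add_cos_sq θ
      have hx1 : (ρ * Real.cos θ) ^ 2 + (ρ * Real.sin θ) ^ 2 = ρ ^ 2 := by
        linear_combination ρ ^ 2 * hsc
      rw [hψ]
      simp only [hTdef, mem_setOf_eq, hx1]
      constructor
      · intro h1; nlinarith
      · intro h1; nlinarith
    by_cases hρ2 : ρ ≤ R
    · have hcong : ∀ θ : ℝ, ENNReal.ofReal ρ * T.indicator 1 (polarCoord.symm (ρ, θ))
          = ENNReal.ofReal ρ := by
        intro θ
        rw [Set.indicator_of_mem ((hmem θ).2 hρ2), Pi.one_apply, mul_one]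
      simp_rw [hcong]
      rw [lintegral_const, Measure.restrict_apply MeasurableSet.univ, Set.univ_inter,
        Real.volume_Ioo, Set.indicator_of_mem (show ρ ∈ Ioc 0 R from ⟨hρ, hρ2⟩),
        ← ENNReal.ofReal_mul hρ.le]
      congr 1
      ring
    · have hcong : ∀ θ : ℝ, ENNReal.ofReal ρ * T.indicator 1 (polarCoord.symm (ρ, θ)) = 0 := by
        intro θ
        rw [Set.indicator_of_notMem (fun h => hρ2 ((hmem θ).1 h)), mul_zero]
      simp_rw [hcong]
      rw [lintegral_zero, Set.indicator_of_notMem (by simp [Set.mem_Ioc, hρ2])]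
  rw [setLIntegral_congr_fun_ae measurableSet_Ioi (ae_of_all _ key)]
  have hsub2 : Ioc (0:ℝ) R ⊆ Ioi 0 := fun x hx => hx.1
  rw [lintegral_indicator measurableSet_Ioc, Measure.restrict_restrict measurableSet_Ioc,
    Set.inter_eq_left.2 hsub2]
  rw [← ofReal_integral_eq_lintegral_ofReal]
  · rw [← intervalIntegral.integral_of_le hR]
    rw [intervalIntegral.integral_const_mul, integral_id]
    congr 1
    ring
  · exact (continuous_const.mul continuous_id).integrableOn_Ioc
  · filter_upwards [ae_restrict_mem measurableSet_Ioc] with ρ hρ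
    have := hρ.1
    positivity

theorem subst_core (R₁ d h R₂ r : ℝ) (hd : 0 < d) (hh : 0 < h) (hR₂ : 0 < R₂) (hr : R₂ ≤ r) :
    ∫ z in Real.sqrt (R₂ ^ 2 + h ^ 2)..Real.sqrt (r ^ 2 + h ^ 2),
        2 * z * Real.arccos ((d ^ 2 + z ^ 2 - h ^ 2 - R₁ ^ 2) / (2 * d * Real.sqrt (z ^ 2 - h ^ 2)))
      = ∫ ρ in R₂..r, 2 * ρ * Real.arccos ((d ^ 2 + ρ ^ 2 - R₁ ^ 2) / (2 * d * ρ)) := by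
  set g : ℝ → ℝ := fun z =>
    2 * z * Real.arccos ((d ^ 2 + z ^ 2 - h ^ 2 - R₁ ^ 2) / (2 * d * Real.sqrt (z ^ 2 - h ^ 2)))
    with hg_def
  set φ : ℝ → ℝ := fun ρ => Real.sqrt (ρ ^ 2 + h ^ 2) with hφ_def
  have huIcc : uIcc R₂ r = Icc R₂ r := uIcc_of_le hr
  have hderiv : ∀ ρ ∈ uIcc R₂ r, HasDerivAt φ (2 * ρ / (2 * Real.sqrt (ρ ^ 2 + h ^ 2))) ρ := by
    intro ρ _
    have h0 : ρ ^ 2 + h ^ 2 ≠ 0 := by positivity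
    have hin : HasDerivAt (fun ρ : ℝ => ρ ^ 2 + h ^ 2) (2 * ρ) ρ := by
      simpa using (hasDerivAt_pow 2 ρ).add_const (h ^ 2)
    exact hin.sqrt h0
  have hcont' : ContinuousOn (fun ρ => 2 * ρ / (2 * Real.sqrt (ρ ^ 2 + h ^ 2))) (uIcc R₂ r) := by
    apply ContinuousOn.div
    · fun_prop
    · fun_prop
    · intro ρ _
      have : 0 < Real.sqrt (ρ ^ 2 + h ^ 2) := Real.sqrt_pos.2 (by positivity)
      positivity
  have himg : φ '' uIcc R₂ r ⊆ Ioi h := by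
    rintro z ⟨ρ, hρ, rfl⟩
    rw [huIcc] at hρ
    have : Real.sqrt (h ^ 2) < Real.sqrt (ρ ^ 2 + h ^ 2) := by
      apply Real.sqrt_lt_sqrt (sq_nonneg h)
      nlinarith [hρ.1]
    rwa [Real.sqrt_sq hh.le] at this
  have hgcont : ContinuousOn g (Ioi h) := by
    apply ContinuousOn.mul (by fun_prop)
    apply Real.continuous_arccos.comp_continuousOn
    apply ContinuousOn.div (by fun_prop) (by fun_prop)
    intro z hz
    rw [mem_Ioi] at hz
    have h1 : 0 < z ^ 2 - h ^ 2 := by nlinarith [hh]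
    have : 0 < Real.sqrt (z ^ 2 - h ^ 2) := Real.sqrt_pos.2 h1
    positivity
  have key := intervalIntegral.integral_comp_smul_deriv' hderiv hcont'
    (hgcont.mono himg)
  have hφR₂ : φ R₂ = Real.sqrt (R₂ ^ 2 + h ^ 2) := rfl
  have hφr : φ r = Real.sqrt (r ^ 2 + h ^ 2) := rfl
  rw [← hφR₂, ← hφr, ← key]
  apply intervalIntegral.integral_congr
  intro ρ hρ
  rw [huIcc] at hρ
  have hρ0 : 0 < ρ := hR₂.trans_le hρ.1
  have hS : 0 < Real.sqrt (ρ ^ 2 + h ^ 2) := Real.sqrt_pos.2 (by positivity)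
  have hφsq : φ ρ ^ 2 = ρ ^ 2 + h ^ 2 := Real.sq_sqrt (by positivity)
  have harg : (d ^ 2 + φ ρ ^ 2 - h ^ 2 - R₁ ^ 2) / (2 * d * Real.sqrt (φ ρ ^ 2 - h ^ 2))
      = (d ^ 2 + ρ ^ 2 - R₁ ^ 2) / (2 * d * ρ) := by
    rw [hφsq]
    congr 1
    · ring
    · rw [show ρ ^ 2 + h ^ 2 - h ^ 2 = ρ ^ 2 by ring, Real.sqrt_sq hρ0.le]
  show (2 * ρ / (2 * Real.sqrt (ρ ^ 2 + h ^ 2))) • g (φ ρ) = _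
  rw [hg_def]
  simp only [smul_eq_mul]
  rw [harg]
  have hSne : Real.sqrt (ρ ^ 2 + h ^ 2) ≠ 0 := ne_of_gt hS
  have hφρ : φ ρ = Real.sqrt (ρ ^ 2 + h ^ 2) := rfl
  rw [hφρ]
  field_simp

theorem dens_eq (R₁ R₂ d h : ℝ) (hR₂ : 0 < R₂) (hd : 0 < d) (hh : 0 < h)
    (hsub : R₂ + d < R₁) (z : ℝ) :
    ENNReal.ofReal (
        if Real.sqrt (R₂ ^ 2 + h ^ 2) ≤ z ∧ z ≤ Real.sqrt ((R₁ - d) ^ 2 + h ^ 2) then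
          2 * z / (R₁ ^ 2 - R₂ ^ 2)
        else if Real.sqrt ((R₁ - d) ^ 2 + h ^ 2) < z ∧ z ≤ Real.sqrt ((R₁ + d) ^ 2 + h ^ 2) then
          2 * z / (Real.pi * (R₁ ^ 2 - R₂ ^ 2)) *
            Real.arccos ((d ^ 2 + z ^ 2 - h ^ 2 - R₁ ^ 2) / (2 * d * Real.sqrt (z ^ 2 - h ^ 2)))
        else 0)
      = (Ici (Real.sqrt (R₂ ^ 2 + h ^ 2))).indicator (fun z =>
          ENNReal.ofReal (2 * z / (Real.pi * (R₁ ^ 2 - R₂ ^ 2)) *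
            Real.arccos ((d ^ 2 + z ^ 2 - h ^ 2 - R₁ ^ 2) /
              (2 * d * Real.sqrt (z ^ 2 - h ^ 2))))) z := by
  have hR₁ : 0 < R₁ := by linarith
  have hc : 0 < R₁ ^ 2 - R₂ ^ 2 := by nlinarith
  have hz0pos : 0 < Real.sqrt (R₂ ^ 2 + h ^ 2) := Real.sqrt_pos.2 (by positivity)
  have hz₀sq : Real.sqrt (R₂ ^ 2 + h ^ 2) ^ 2 = R₂ ^ 2 + h ^ 2 := Real.sq_sqrt (by positivity)
  have hz01 : Real.sqrt (R₂ ^ 2 + h ^ 2) ≤ Real.sqrt ((R₁ - d) ^ 2 + h ^ 2) :=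
    Real.sqrt_le_sqrt (by nlinarith)
  by_cases h1 : Real.sqrt (R₂ ^ 2 + h ^ 2) ≤ z
  case neg =>
    rw [if_neg (fun hcon => h1 hcon.1), if_neg (fun hcon => h1 (hz01.trans hcon.1.le)),
      Set.indicator_of_notMem (fun hmem => h1 (mem_Ici.1 hmem)), ENNReal.ofReal_zero]
  case pos =>
    rw [Set.indicator_of_mem (mem_Ici.2 h1)]
    have hzpos : 0 < z := hz0pos.trans_le h1
    have hzsq : R₂ ^ 2 + h ^ 2 ≤ z ^ 2 := by nlinarith [hz0pos.le, h1]
    have hρzsq : Real.sqrt (z ^ 2 - h ^ 2) ^ 2 = z ^ 2 - h ^ 2 :=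
      Real.sq_sqrt (by nlinarith)
    have hρzR₂ : R₂ ≤ Real.sqrt (z ^ 2 - h ^ 2) := by
      have h9 := Real.sqrt_le_sqrt (show R₂ ^ 2 ≤ z ^ 2 - h ^ 2 by nlinarith)
      rwa [Real.sqrt_sq hR₂.le] at h9
    have hρzpos : 0 < Real.sqrt (z ^ 2 - h ^ 2) := hR₂.trans_le hρzR₂
    by_cases h2 : z ≤ Real.sqrt ((R₁ - d) ^ 2 + h ^ 2)
    · rw [if_pos ⟨h1, h2⟩]
      have hz1sq : Real.sqrt ((R₁ - d) ^ 2 + h ^ 2) ^ 2 = (R₁ - d) ^ 2 + h ^ 2 :=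
        Real.sq_sqrt (by positivity)
      have hρzle : Real.sqrt (z ^ 2 - h ^ 2) ≤ R₁ - d := by
        have h10 : z ^ 2 ≤ (R₁ - d) ^ 2 + h ^ 2 := by
          nlinarith [Real.sqrt_nonneg ((R₁ - d) ^ 2 + h ^ 2), h2, hzpos.le]
        have h11 := Real.sqrt_le_sqrt (show z ^ 2 - h ^ 2 ≤ (R₁ - d) ^ 2 by linarith)
        rwa [Real.sqrt_sq (by linarith : (0:ℝ) ≤ R₁ - d)] at h11
      have harc : Real.arccos ((d ^ 2 + z ^ 2 - h ^ 2 - R₁ ^ 2) /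
          (2 * d * Real.sqrt (z ^ 2 - h ^ 2))) = π := by
        apply Real.arccos_eq_pi.2
        rw [div_le_iff₀ (mul_pos (mul_pos two_pos hd) hρzpos)]
        have hSd : Real.sqrt (z ^ 2 - h ^ 2) + d ≤ R₁ := by linarith
        have hS0 : 0 ≤ Real.sqrt (z ^ 2 - h ^ 2) + d := by positivity
        nlinarith [hρzsq, hSd, hS0]
      rw [harc]
      congr 1
      have hπ0 := Real.pi_ne_zero
      field_simp
    · by_cases h3 : z ≤ Real.sqrt ((R₁ + d) ^ 2 + h ^ 2)
      · rw [if_neg (fun hcon => h2 hcon.2), if_pos ⟨not_le.1 h2, h3⟩]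
      · rw [if_neg (fun hcon => h2 hcon.2), if_neg (fun hcon => h3 hcon.2)]
        have hz2sq : Real.sqrt ((R₁ + d) ^ 2 + h ^ 2) ^ 2 = (R₁ + d) ^ 2 + h ^ 2 :=
          Real.sq_sqrt (by positivity)
        have hρzgt : R₁ + d ≤ Real.sqrt (z ^ 2 - h ^ 2) := by
          have h12 : (R₁ + d) ^ 2 + h ^ 2 ≤ z ^ 2 := by
            nlinarith [Real.sqrt_nonneg ((R₁ + d) ^ 2 + h ^ 2), not_le.1 h3, hzpos.le]
          have h13 := Real.sqrt_le_sqrt (show (R₁ + d) ^ 2 ≤ z ^ 2 - h ^ 2 by linarith)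
          rwa [Real.sqrt_sq (by linarith : (0:ℝ) ≤ R₁ + d)] at h13
        have harc : Real.arccos ((d ^ 2 + z ^ 2 - h ^ 2 - R₁ ^ 2) /
            (2 * d * Real.sqrt (z ^ 2 - h ^ 2))) = 0 := by
          apply Real.arccos_eq_zero.2
          rw [le_div_iff₀ (mul_pos (mul_pos two_pos hd) hρzpos)]
          have hSd : R₁ ≤ Real.sqrt (z ^ 2 - h ^ 2) - d := by linarith
          have h1' : R₁ * R₁ ≤ (Real.sqrt (z ^ 2 - h ^ 2) - d) * (Real.sqrt (z ^ 2 - h ^ 2) - d) :=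
            mul_self_le_mul_self hR₁.le hSd
          have hexp : (Real.sqrt (z ^ 2 - h ^ 2) - d) * (Real.sqrt (z ^ 2 - h ^ 2) - d)
              = Real.sqrt (z ^ 2 - h ^ 2) ^ 2 - 2 * d * Real.sqrt (z ^ 2 - h ^ 2) + d ^ 2 := by
            ring
          rw [hexp, hρzsq] at h1'
          have hR₁sq : R₁ * R₁ = R₁ ^ 2 := by ring
          rw [hR₁sq] at h1'
          linarith
        rw [harc, mul_zero]

/-- With `P` uniform on `S₁ \ S₂` and the ABS at height `h` above `C = (d,0)`,
the 3-D distance `Z_c = √(|P−C|² + h²)` has density `2z/(R₁²−R₂²)` on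
`[√(R₂²+h²), √((R₁−d)²+h²)]` and
`(2z/(π(R₁²−R₂²)))·arccos((d²+z²−h²−R₁²)/(2d√(z²−h²)))` on
`(√((R₁−d)²+h²), √((R₁+d)²+h²)]` (using `arcsec x = arccos (1/x)`). -/
theorem stmt10 (R₁ R₂ d h : ℝ) (hR₂ : 0 < R₂) (hd : 0 < d) (hh : 0 < h)
    (hsub : R₂ + d < R₁)
    (A : Set (ℝ × ℝ))
    (hA : A = {x : ℝ × ℝ | x.1 ^ 2 + x.2 ^ 2 ≤ R₁ ^ 2} \
              {x : ℝ × ℝ | (x.1 - d) ^ 2 + x.2 ^ 2 ≤ R₂ ^ 2})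
    (P : Measure (ℝ × ℝ)) (hP : P = (volume A)⁻¹ • volume.restrict A) :
    P.map (fun x => Real.sqrt ((x.1 - d) ^ 2 + x.2 ^ 2 + h ^ 2))
      = volume.withDensity (fun z =>
        ENNReal.ofReal (
          if Real.sqrt (R₂ ^ 2 + h ^ 2) ≤ z ∧ z ≤ Real.sqrt ((R₁ - d) ^ 2 + h ^ 2) then
            2 * z / (R₁ ^ 2 - R₂ ^ 2)
          else if Real.sqrt ((R₁ - d) ^ 2 + h ^ 2) < z ∧ z ≤ Real.sqrt ((R₁ + d) ^ 2 + h ^ 2) then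
            2 * z / (Real.pi * (R₁ ^ 2 - R₂ ^ 2)) *
              Real.arccos ((d ^ 2 + z ^ 2 - h ^ 2 - R₁ ^ 2) / (2 * d * Real.sqrt (z ^ 2 - h ^ 2)))
          else 0)) := by
  subst hA; subst hP
  have hR₁ : 0 < R₁ := by linarith
  have hc : 0 < R₁ ^ 2 - R₂ ^ 2 := by nlinarith
  have hπc : 0 < π * (R₁ ^ 2 - R₂ ^ 2) := by positivity
  have hz0pos : 0 < Real.sqrt (R₂ ^ 2 + h ^ 2) := Real.sqrt_pos.2 (by positivity)
  have hz₀sq : Real.sqrt (R₂ ^ 2 + h ^ 2) ^ 2 = R₂ ^ 2 + h ^ 2 :=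
    Real.sq_sqrt (by positivity)
  have hz01 : Real.sqrt (R₂ ^ 2 + h ^ 2) ≤ Real.sqrt ((R₁ - d) ^ 2 + h ^ 2) :=
    Real.sqrt_le_sqrt (by nlinarith)
  have hc1 : Measurable fun q : ℝ × ℝ => q.1 ^ 2 + q.2 ^ 2 := by fun_prop
  have hc2 : Measurable fun q : ℝ × ℝ => (q.1 - d) ^ 2 + q.2 ^ 2 := by fun_prop
  have hD₁m : MeasurableSet {x : ℝ × ℝ | x.1 ^ 2 + x.2 ^ 2 ≤ R₁ ^ 2} :=
    measurableSet_le hc1 measurable_const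
  have hD₂m : MeasurableSet {x : ℝ × ℝ | (x.1 - d) ^ 2 + x.2 ^ 2 ≤ R₂ ^ 2} :=
    measurableSet_le hc2 measurable_const
  have hgc : Continuous fun x : ℝ × ℝ => Real.sqrt ((x.1 - d) ^ 2 + x.2 ^ 2 + h ^ 2) := by
    fun_prop
  have hgm := hgc.measurable
  have hvolD₂ : volume {x : ℝ × ℝ | (x.1 - d) ^ 2 + x.2 ^ 2 ≤ R₂ ^ 2}
      = ENNReal.ofReal (π * R₂ ^ 2) := by
    have hset : {x : ℝ × ℝ | (x.1 - d) ^ 2 + x.2 ^ 2 ≤ R₂ ^ 2}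
        = (fun p : ℝ × ℝ => p + (-d, 0)) ⁻¹' {q : ℝ × ℝ | q.1 ^ 2 + q.2 ^ 2 ≤ R₂ ^ 2} := by
      ext p
      have e1 : (p.1 + -d) ^ 2 + (p.2 + 0) ^ 2 = (p.1 - d) ^ 2 + p.2 ^ 2 := by ring
      simp only [mem_preimage, mem_setOf_eq, Prod.fst_add, Prod.snd_add, e1]
    rw [hset, (measurePreserving_add_right volume ((-d, 0) : ℝ × ℝ)).measure_preimage
      (measurableSet_le (by fun_prop) measurable_const).nullMeasurableSet,
      disk_vol R₂ hR₂.le]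
  have hsubD : {x : ℝ × ℝ | (x.1 - d) ^ 2 + x.2 ^ 2 ≤ R₂ ^ 2}
      ⊆ {x : ℝ × ℝ | x.1 ^ 2 + x.2 ^ 2 ≤ R₁ ^ 2} := by
    intro p hp
    simp only [mem_setOf_eq] at hp ⊢
    have hu : p.1 - d ≤ R₂ := by nlinarith [hp, sq_nonneg p.2]
    nlinarith [hp, mul_le_mul_of_nonneg_left hu (by linarith : (0:ℝ) ≤ 2 * d),
      mul_pos (show (0:ℝ) < R₁ - R₂ - d by linarith)
        (show (0:ℝ) < R₁ + R₂ + d by linarith)]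
  have hvolA : volume ({x : ℝ × ℝ | x.1 ^ 2 + x.2 ^ 2 ≤ R₁ ^ 2} \
      {x : ℝ × ℝ | (x.1 - d) ^ 2 + x.2 ^ 2 ≤ R₂ ^ 2})
      = ENNReal.ofReal (π * (R₁ ^ 2 - R₂ ^ 2)) := by
    rw [measure_diff hsubD hD₂m.nullMeasurableSet
      (by rw [hvolD₂]; exact ENNReal.ofReal_ne_top), disk_vol R₁ hR₁.le, hvolD₂,
      ← ENNReal.ofReal_sub _ (by positivity)]
    congr 1
    ring
  have hvolAne : volume ({x : ℝ × ℝ | x.1 ^ 2 + x.2 ^ 2 ≤ R₁ ^ 2} \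
      {x : ℝ × ℝ | (x.1 - d) ^ 2 + x.2 ^ 2 ≤ R₂ ^ 2}) ≠ 0 := by
    rw [hvolA]
    exact (ENNReal.ofReal_pos.2 hπc).ne'
  haveI : IsFiniteMeasure
      (((volume ({x : ℝ × ℝ | x.1 ^ 2 + x.2 ^ 2 ≤ R₁ ^ 2} \
          {x : ℝ × ℝ | (x.1 - d) ^ 2 + x.2 ^ 2 ≤ R₂ ^ 2}))⁻¹ •
        volume.restrict ({x : ℝ × ℝ | x.1 ^ 2 + x.2 ^ 2 ≤ R₁ ^ 2} \
          {x : ℝ × ℝ | (x.1 - d) ^ 2 + x.2 ^ 2 ≤ R₂ ^ 2})).map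
        (fun x : ℝ × ℝ => Real.sqrt ((x.1 - d) ^ 2 + x.2 ^ 2 + h ^ 2))) := by
    constructor
    rw [Measure.map_apply hgm MeasurableSet.univ, Set.preimage_univ, Measure.smul_apply,
      Measure.restrict_apply MeasurableSet.univ, Set.univ_inter, smul_eq_mul,
      ENNReal.inv_mul_cancel hvolAne (by rw [hvolA]; exact ENNReal.ofReal_ne_top)]
    exact ENNReal.one_lt_top
  refine Measure.ext_of_Iic _ _ fun a => ?_
  rw [Measure.map_apply hgm measurableSet_Iic, Measure.smul_apply,
    Measure.restrict_apply (hgm measurableSet_Iic), smul_eq_mul,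
    withDensity_apply _ measurableSet_Iic]
  simp_rw [dens_eq R₁ R₂ d h hR₂ hd hh hsub]
  rw [lintegral_indicator measurableSet_Ici, Measure.restrict_restrict measurableSet_Ici,
    Set.Ici_inter_Iic]
  rcases lt_or_ge a (Real.sqrt (R₂ ^ 2 + h ^ 2)) with hlt | hge
  · -- a below the support : both sides vanish
    have hempty : (fun x : ℝ × ℝ => Real.sqrt ((x.1 - d) ^ 2 + x.2 ^ 2 + h ^ 2)) ⁻¹' Iic a ∩
        ({x : ℝ × ℝ | x.1 ^ 2 + x.2 ^ 2 ≤ R₁ ^ 2} \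
          {x : ℝ × ℝ | (x.1 - d) ^ 2 + x.2 ^ 2 ≤ R₂ ^ 2}) = ∅ := by
      rw [Set.eq_empty_iff_forall_notMem]
      rintro p ⟨hp1, _, hp3⟩
      rw [mem_preimage, mem_Iic] at hp1
      simp only [mem_setOf_eq, not_le] at hp3
      have : Real.sqrt (R₂ ^ 2 + h ^ 2) ≤ Real.sqrt ((p.1 - d) ^ 2 + p.2 ^ 2 + h ^ 2) :=
        Real.sqrt_le_sqrt (by linarith)
      linarith
    rw [hempty, measure_empty, mul_zero, Set.Icc_eq_empty (by linarith),
      Measure.restrict_empty, lintegral_zero_measure]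
  · -- main case
    have ha0 : 0 ≤ a := hz0pos.le.trans hge
    have ha2 : R₂ ^ 2 + h ^ 2 ≤ a ^ 2 := by
      have h20 := mul_self_le_mul_self hz0pos.le hge
      have e1 : Real.sqrt (R₂ ^ 2 + h ^ 2) * Real.sqrt (R₂ ^ 2 + h ^ 2) = R₂ ^ 2 + h ^ 2 :=
        Real.mul_self_sqrt (by positivity)
      have e2 : a * a = a ^ 2 := by ring
      linarith
    set r := Real.sqrt (a ^ 2 - h ^ 2) with hr_def
    have hr2 : r ^ 2 = a ^ 2 - h ^ 2 := Real.sq_sqrt (by nlinarith [hR₂.le, ha2])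
    have hrR₂ : R₂ ≤ r := by
      have h5 := Real.sqrt_le_sqrt (show R₂ ^ 2 ≤ a ^ 2 - h ^ 2 by linarith)
      rwa [Real.sqrt_sq hR₂.le] at h5
    have hra : Real.sqrt (r ^ 2 + h ^ 2) = a := by
      rw [hr2, show a ^ 2 - h ^ 2 + h ^ 2 = a ^ 2 by ring, Real.sqrt_sq ha0]
    have hseteq : (fun x : ℝ × ℝ => Real.sqrt ((x.1 - d) ^ 2 + x.2 ^ 2 + h ^ 2)) ⁻¹' Iic a ∩
        ({x : ℝ × ℝ | x.1 ^ 2 + x.2 ^ 2 ≤ R₁ ^ 2} \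
          {x : ℝ × ℝ | (x.1 - d) ^ 2 + x.2 ^ 2 ≤ R₂ ^ 2})
        = {p : ℝ × ℝ | R₂ ^ 2 < (p.1 - d) ^ 2 + p.2 ^ 2 ∧ (p.1 - d) ^ 2 + p.2 ^ 2 ≤ r ^ 2
            ∧ p.1 ^ 2 + p.2 ^ 2 ≤ R₁ ^ 2} := by
      ext p
      simp only [mem_inter_iff, mem_preimage, mem_Iic, mem_diff, mem_setOf_eq, not_le]
      constructor
      · rintro ⟨hp1, hp2, hp3⟩
        have h0 : (0:ℝ) ≤ (p.1 - d) ^ 2 + p.2 ^ 2 + h ^ 2 := by positivity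
        have h6 := mul_self_le_mul_self (Real.sqrt_nonneg _) hp1
        rw [Real.mul_self_sqrt h0] at h6
        have e2 : a * a = a ^ 2 := by ring
        exact ⟨hp3, by linarith, hp2⟩
      · rintro ⟨hp1, hp2, hp3⟩
        refine ⟨?_, hp3, hp1⟩
        have h7 : (p.1 - d) ^ 2 + p.2 ^ 2 + h ^ 2 ≤ a ^ 2 := by linarith
        have h8 := Real.sqrt_le_sqrt h7
        rwa [Real.sqrt_sq ha0] at h8
    rw [hseteq, core_vol R₁ d hd R₂ r hR₂.le hrR₂, hvolA,
      ← Measure.restrict_congr_set Ioc_ae_eq_Icc]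
    have hFcont : ContinuousOn (fun z => 2 * z / (Real.pi * (R₁ ^ 2 - R₂ ^ 2)) *
        Real.arccos ((d ^ 2 + z ^ 2 - h ^ 2 - R₁ ^ 2) / (2 * d * Real.sqrt (z ^ 2 - h ^ 2))))
        (Icc (Real.sqrt (R₂ ^ 2 + h ^ 2)) a) := by
      apply ContinuousOn.mul (by fun_prop)
      apply Real.continuous_arccos.comp_continuousOn
      apply ContinuousOn.div (by fun_prop) (by fun_prop)
      intro z hz
      have hzpos : 0 < z := hz0pos.trans_le hz.1
      have hzsq : R₂ ^ 2 + h ^ 2 ≤ z ^ 2 := by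
        have h20 := mul_self_le_mul_self hz0pos.le hz.1
        have e1 : Real.sqrt (R₂ ^ 2 + h ^ 2) * Real.sqrt (R₂ ^ 2 + h ^ 2) = R₂ ^ 2 + h ^ 2 :=
          Real.mul_self_sqrt (by positivity)
        nlinarith [h20, e1]
      have h14 : 0 < Real.sqrt (z ^ 2 - h ^ 2) := Real.sqrt_pos.2 (by nlinarith [hR₂])
      exact ne_of_gt (mul_pos (mul_pos two_pos hd) h14)
    have hFint : IntegrableOn (fun z => 2 * z / (Real.pi * (R₁ ^ 2 - R₂ ^ 2)) *
        Real.arccos ((d ^ 2 + z ^ 2 - h ^ 2 - R₁ ^ 2) / (2 * d * Real.sqrt (z ^ 2 - h ^ 2))))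
        (Ioc (Real.sqrt (R₂ ^ 2 + h ^ 2)) a) :=
      (hFcont.integrableOn_Icc).mono_set Ioc_subset_Icc_self
    have hFnn : 0 ≤ᵐ[volume.restrict (Ioc (Real.sqrt (R₂ ^ 2 + h ^ 2)) a)]
        (fun z => 2 * z / (Real.pi * (R₁ ^ 2 - R₂ ^ 2)) *
          Real.arccos ((d ^ 2 + z ^ 2 - h ^ 2 - R₁ ^ 2) /
            (2 * d * Real.sqrt (z ^ 2 - h ^ 2)))) := by
      filter_upwards [ae_restrict_mem measurableSet_Ioc] with z hz
      have hzpos : 0 < z := hz0pos.trans hz.1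
      exact mul_nonneg (by positivity) (Real.arccos_nonneg _)
    rw [← ofReal_integral_eq_lintegral_ofReal hFint hFnn,
      ← intervalIntegral.integral_of_le hge]
    have hFeq : ∀ z ∈ uIcc (Real.sqrt (R₂ ^ 2 + h ^ 2)) a,
        2 * z / (Real.pi * (R₁ ^ 2 - R₂ ^ 2)) *
          Real.arccos ((d ^ 2 + z ^ 2 - h ^ 2 - R₁ ^ 2) / (2 * d * Real.sqrt (z ^ 2 - h ^ 2)))
        = (π * (R₁ ^ 2 - R₂ ^ 2))⁻¹ * (2 * z * Real.arccos
            ((d ^ 2 + z ^ 2 - h ^ 2 - R₁ ^ 2) / (2 * d * Real.sqrt (z ^ 2 - h ^ 2)))) := by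
      intro z _
      ring
    rw [intervalIntegral.integral_congr hFeq, intervalIntegral.integral_const_mul, ← hra,
      subst_core R₁ d h R₂ r hd hh hR₂ hrR₂,
      ENNReal.ofReal_mul (inv_nonneg.2 hπc.le), ENNReal.ofReal_inv_of_pos hπc]
end

section
/- If the fading gain G ~ Gamma(m, m) for positive integer m and I is an independent nonnegative random variable, then the coverage probability P(c·G > s·(I + σ²)) for constants c, s, σ² > 0 can be written as Σ_{n=0}^{m−1} ((−t)^n/n!) e^{−tσ²} Σ_{k=0}^{n} C(n,k)(−σ²)^{n−k} L_I^{(k)}(t) evaluated at t = ms/c, where L_I is the Laplace transform of I and L_I^{(k)} its k-th derivative; in particular for m = 1 it reduces to e^{−tσ²} L_I(t). -/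
open MeasureTheory ProbabilityTheory Real Set Filter Topology

lemma erlang_deriv_sum (y : ℝ) (k : ℕ) :
    ∑ n ∈ Finset.range (k+1), ((n : ℝ) * y ^ (n-1)) / n.factorial
      = ∑ n ∈ Finset.range k, y ^ n / n.factorial := by
  rw [Finset.sum_range_succ']
  simp only [Nat.cast_zero, zero_mul, Nat.factorial_zero, Nat.cast_one, zero_div, add_zero]
  refine Finset.sum_congr rfl fun i _ => ?_
  have h : ((i+1 : ℕ) : ℝ) ≠ 0 := by positivity
  rw [Nat.add_sub_cancel, Nat.factorial_succ]
  push_cast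
  field_simp

lemma erlang_hasDerivAt (r : ℝ) (k : ℕ) (u : ℝ) :
    HasDerivAt (fun v => Real.exp (-(r*v)) * ∑ n ∈ Finset.range (k+1), (r*v)^n / n.factorial)
      (-(r^(k+1) * u^k * Real.exp (-(r*u)) / k.factorial)) u := by
  have he : HasDerivAt (fun v : ℝ => Real.exp (-(r*v))) (Real.exp (-(r*u)) * -(r*1)) u :=
    (((hasDerivAt_id u).const_mul r).neg).exp
  have hs : HasDerivAt (fun v : ℝ => ∑ n ∈ Finset.range (k+1), (r*v)^n / n.factorial)
      (∑ n ∈ Finset.range (k+1), ((n : ℝ) * (r*u)^(n-1) * (r*1)) / n.factorial) u := by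
    apply HasDerivAt.fun_sum
    intro n _
    exact (((hasDerivAt_id u).const_mul r).pow n).div_const _
  have := he.fun_mul hs
  refine this.congr_deriv ?_
  have h1 : (∑ n ∈ Finset.range (k+1), ((n : ℝ) * (r*u)^(n-1) * (r*1)) / n.factorial)
      = r * ∑ n ∈ Finset.range k, (r*u)^n / n.factorial := by
    rw [← erlang_deriv_sum (r*u) k, Finset.mul_sum]
    exact Finset.sum_congr rfl fun n _ => by ring
  rw [h1, Finset.sum_range_succ]
  have h2 : r * (r*u)^k = r^(k+1) * u^k := by rw [mul_pow]; ring
  linear_combination (-(Real.exp (-(r*u)) / (k.factorial:ℝ))) * h2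

lemma erlang_tendsto (r : ℝ) (hr : 0 < r) (k : ℕ) :
    Tendsto (fun u => Real.exp (-(r*u)) * ∑ n ∈ Finset.range k, (r*u)^n / n.factorial)
      atTop (𝓝 0) := by
  have h : ∀ u : ℝ, Real.exp (-(r*u)) * ∑ n ∈ Finset.range k, (r*u)^n / n.factorial
      = ∑ n ∈ Finset.range k, ((r*u)^n * Real.exp (-(r*u))) / n.factorial := by
    intro u; rw [Finset.mul_sum]; exact Finset.sum_congr rfl fun n _ => by ring
  simp_rw [h]
  have : (0:ℝ) = ∑ n ∈ Finset.range k, (0:ℝ) / n.factorial := by simp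
  rw [this]
  apply tendsto_finset_sum
  intro n _
  apply Tendsto.div_const
  have hru : Tendsto (fun u : ℝ => r * u) atTop atTop :=
    Tendsto.const_mul_atTop hr tendsto_id
  have := (tendsto_pow_mul_exp_neg_atTop_nhds_zero n).comp hru
  simpa [Function.comp_def] using this

lemma erlang_integrable (r : ℝ) (hr : 0 < r) (k : ℕ) {x : ℝ} (hx : 0 ≤ x) :
    IntegrableOn (fun u => r^(k+1) * u^k * Real.exp (-(r*u)) / k.factorial) (Ioi x) := by
  have h0 : IntegrableOn (fun u : ℝ => u ^ (k:ℝ) * Real.exp (-r * u ^ (1:ℝ))) (Ioi 0) :=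
    integrableOn_rpow_mul_exp_neg_mul_rpow (lt_of_lt_of_le neg_one_lt_zero (Nat.cast_nonneg k)) one_pos hr
  have h1 : IntegrableOn (fun u : ℝ => u ^ k * Real.exp (-(r*u))) (Ioi 0) := by
    apply h0.congr_fun _ measurableSet_Ioi
    intro u hu
    simp only [Real.rpow_natCast, Real.rpow_one, neg_mul]
  have h2 : IntegrableOn (fun u : ℝ => r^(k+1) * u^k * Real.exp (-(r*u)) / k.factorial) (Ioi 0) := by
    have h3 : IntegrableOn (fun u : ℝ => r^(k+1) * (u^k * Real.exp (-(r*u))) / k.factorial)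
        (Ioi 0) := (h1.const_mul (r^(k+1))).div_const _
    exact h3.congr_fun (fun u _ => by ring) measurableSet_Ioi
  exact h2.mono_set (Ioi_subset_Ioi hx)

lemma gamma_survival (m : ℕ) (hm : 1 ≤ m) (r : ℝ) (hr : 0 < r) {x : ℝ} (hx : 0 ≤ x) :
    gammaMeasure (m : ℝ) r (Ioi x)
      = ENNReal.ofReal (Real.exp (-(r*x)) * ∑ n ∈ Finset.range m, (r*x)^n / n.factorial) := by
  obtain ⟨k, rfl⟩ : ∃ k, m = k + 1 := ⟨m - 1, (Nat.succ_pred_eq_of_pos hm).symm⟩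
  set g : ℝ → ℝ := fun u => r^(k+1) * u^k * Real.exp (-(r*u)) / k.factorial with hg
  set F : ℝ → ℝ :=
    fun u => Real.exp (-(r*u)) * ∑ n ∈ Finset.range (k+1), (r*u)^n / n.factorial with hF
  have hpdf : ∀ u ∈ Ioi x, gammaPDF ((k+1 : ℕ) : ℝ) r u = ENNReal.ofReal (g u) := by
    intro u hu
    have hu0 : (0:ℝ) ≤ u := le_of_lt (lt_of_le_of_lt hx hu)
    rw [gammaPDF_of_nonneg hu0]
    congr 1
    have hGamma : Real.Gamma ((k+1 : ℕ) : ℝ) = (k.factorial : ℝ) := by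
      push_cast
      exact_mod_cast Real.Gamma_nat_eq_factorial k
    have hpow : u ^ (((k+1 : ℕ) : ℝ) - 1) = u ^ k := by
      have : (((k+1 : ℕ) : ℝ) - 1) = (k : ℝ) := by push_cast; ring
      rw [this, Real.rpow_natCast]
    have hrpow : r ^ ((k+1 : ℕ) : ℝ) = r ^ (k+1) := by
      rw [Real.rpow_natCast]
    rw [hGamma, hpow, hrpow, hg]
    ring
  have hint : ∫ u in Ioi x, g u = F x := by
    have hderiv : ∀ u ∈ Ioi x, HasDerivAt (fun v => -F v) (g u) u := by
      intro u _
      have := (erlang_hasDerivAt r k u).fun_neg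
      simpa [hg, hF] using this
    have hcont : ContinuousWithinAt (fun v => -F v) (Ici x) x :=
      ((erlang_hasDerivAt r k x).neg.continuousAt).continuousWithinAt
    have htend : Tendsto (fun v => -F v) atTop (𝓝 0) := by
      simpa using (erlang_tendsto r hr (k+1)).neg
    have := integral_Ioi_of_hasDerivAt_of_tendsto hcont hderiv (erlang_integrable r hr k hx) htend
    simpa using this
  have hgnn : 0 ≤ᵐ[volume.restrict (Ioi x)] g := by
    filter_upwards [ae_restrict_mem measurableSet_Ioi] with u hu
    have hu0 : (0:ℝ) ≤ u := le_of_lt (lt_of_le_of_lt hx hu)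
    show (0:ℝ) ≤ r^(k+1) * u^k * Real.exp (-(r*u)) / k.factorial
    have h1 : (0:ℝ) ≤ r^(k+1) * u^k := mul_nonneg (pow_nonneg hr.le _) (pow_nonneg hu0 _)
    exact div_nonneg (mul_nonneg h1 (Real.exp_nonneg _)) (Nat.cast_nonneg _)
  rw [gammaMeasure, withDensity_apply _ measurableSet_Ioi,
    setLIntegral_congr_fun measurableSet_Ioi hpdf,
    ← ofReal_integral_eq_lintegral_ofReal (erlang_integrable r hr k hx) hgnn, hint]
/-- For `G ~ Gamma(m, m)` (`m ≥ 1` an integer) independent of `I ≥ 0` with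
Laplace transform `L_I` satisfying `L_I^{(k)}(t) = (−1)^k E[I^k e^{−tI}]`, and `c, s, σ² > 0`,
`P(cG > s(I+σ²)) = Σ_{n=0}^{m−1} ((−t)^n/n!) e^{−tσ²} Σ_{k=0}^{n} C(n,k)(−σ²)^{n−k} L_I^{(k)}(t)`
at `t = ms/c`. -/
theorem stmt17 {Ω : Type*} [MeasurableSpace Ω] (P : Measure Ω) [IsProbabilityMeasure P]
    (m : ℕ) (hm : 1 ≤ m)
    (G I : Ω → ℝ) (hGmeas : Measurable G) (hImeas : Measurable I)
    (hG : P.map G = gammaMeasure (m : ℝ) (m : ℝ))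
    (hInonneg : ∀ ω, 0 ≤ I ω)
    (hindep : IndepFun G I P)
    (L : ℝ → ℝ)
    (hL : ∀ t : ℝ, 0 < t → L t = ∫ ω, Real.exp (-(t * I ω)) ∂P)
    (hLderiv : ∀ (k : ℕ) (t : ℝ), 0 < t →
      iteratedDeriv k L t = (-1 : ℝ) ^ k * ∫ ω, I ω ^ k * Real.exp (-(t * I ω)) ∂P)
    (hInt : ∀ (k : ℕ) (t : ℝ), 0 < t →
      Integrable (fun ω => I ω ^ k * Real.exp (-(t * I ω))) P)
    (c s σ2 : ℝ) (hc : 0 < c) (hs : 0 < s) (hσ : 0 < σ2)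
    (t : ℝ) (ht : t = (m : ℝ) * s / c) :
    (P {ω | c * G ω > s * (I ω + σ2)}).toReal
      = ∑ n ∈ Finset.range m, (-t) ^ n / n.factorial * Real.exp (-(t * σ2)) *
          ∑ k ∈ Finset.range (n + 1),
            (n.choose k : ℝ) * (-σ2) ^ (n - k) * iteratedDeriv k L t := by
  have hm0 : (0:ℝ) < (m:ℝ) := by exact_mod_cast hm
  have ht0 : 0 < t := by rw [ht]; positivity
  -- the conditional survival function
  set φ : ℝ → ℝ :=
    fun i => Real.exp (-(t*(i+σ2))) * ∑ n ∈ Finset.range m, (t*(i+σ2))^n / n.factorial with hφ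
  -- Step 1: reduce to a product measure computation
  have hmap : P.map (fun ω => (I ω, G ω)) = (P.map I).prod (P.map G) :=
    (indepFun_iff_map_prod_eq_prod_map_map hImeas.aemeasurable hGmeas.aemeasurable).mp
      hindep.symm
  have hA : MeasurableSet {p : ℝ × ℝ | s*(p.1+σ2) < c*p.2} :=
    measurableSet_lt ((measurable_fst.add_const σ2).const_mul s)
      (measurable_snd.const_mul c)
  have hev : {ω | c * G ω > s * (I ω + σ2)}
      = (fun ω => (I ω, G ω)) ⁻¹' {p : ℝ × ℝ | s*(p.1+σ2) < c*p.2} := rfl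
  have h1 : P {ω | c * G ω > s * (I ω + σ2)}
      = ∫⁻ i, (P.map G) (Ioi (s*(i+σ2)/c)) ∂(P.map I) := by
    rw [hev, ← Measure.map_apply (hImeas.prodMk hGmeas) hA, hmap,
      Measure.prod_apply hA]
    congr 1
    funext i
    congr 1
    ext g
    simp only [Set.mem_preimage, Set.mem_setOf_eq, Set.mem_Ioi]
    rw [div_lt_iff₀ hc, mul_comm g c]
  -- Step 2: a.e. nonnegativity of i, apply the survival formula
  have haeI : ∀ᵐ i ∂(P.map I), 0 ≤ i := by
    rw [ae_map_iff hImeas.aemeasurable (measurableSet_Ici (a := (0:ℝ)))]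
    exact ae_of_all _ hInonneg
  have h2 : ∫⁻ i, (P.map G) (Ioi (s*(i+σ2)/c)) ∂(P.map I)
      = ∫⁻ i, ENNReal.ofReal (φ i) ∂(P.map I) := by
    apply lintegral_congr_ae
    filter_upwards [haeI] with i hi
    have hx : 0 ≤ s*(i+σ2)/c := by positivity
    rw [hG, gamma_survival m hm (m:ℝ) hm0 hx]
    have hrx : (m:ℝ) * (s*(i+σ2)/c) = t*(i+σ2) := by
      rw [ht]; field_simp
    rw [hφ, hrx]
  -- Step 3: back to Ω and to a Bochner integral
  have hφmeas : Measurable φ :=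
    ((((measurable_id.add_const σ2).const_mul t).neg).exp).mul
      (Finset.measurable_sum _ fun n _ =>
        (((measurable_id.add_const σ2).const_mul t).pow_const n).div_const _)
  have h3 : ∫⁻ i, ENNReal.ofReal (φ i) ∂(P.map I)
      = ∫⁻ ω, ENNReal.ofReal (φ (I ω)) ∂P :=
    lintegral_map (hφmeas.ennreal_ofReal) hImeas
  have hφnn : 0 ≤ᵐ[P] fun ω => φ (I ω) := by
    apply ae_of_all
    intro ω
    have h0 : 0 ≤ t * (I ω + σ2) := by
      have := hInonneg ω; positivity
    apply mul_nonneg (Real.exp_nonneg _)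
    exact Finset.sum_nonneg fun n _ => div_nonneg (pow_nonneg h0 n) (Nat.cast_nonneg _)
  have h4 : (∫⁻ ω, ENNReal.ofReal (φ (I ω)) ∂P).toReal = ∫ ω, φ (I ω) ∂P :=
    (integral_eq_lintegral_of_nonneg_ae hφnn
      ((hφmeas.comp hImeas).aestronglyMeasurable)).symm
  rw [h1, h2, h3, h4]
  -- Step 4: expand φ as a finite sum of integrable functions
  have hψint : ∀ n : ℕ, Integrable (fun ω => (I ω + σ2)^n * Real.exp (-(t * I ω))) P := by
    intro n
    have heq : (fun ω => (I ω + σ2)^n * Real.exp (-(t * I ω)))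
        = fun ω => ∑ k ∈ Finset.range (n+1),
            (σ2^(n-k) * (n.choose k : ℝ)) * (I ω ^ k * Real.exp (-(t * I ω))) := by
      funext ω
      rw [add_pow, Finset.sum_mul]
      exact Finset.sum_congr rfl fun k _ => by ring
    rw [heq]
    exact integrable_finset_sum _ fun k _ => (hInt k t ht0).const_mul _
  have hφexp : ∀ ω, φ (I ω) = ∑ n ∈ Finset.range m,
      (t^n / n.factorial * Real.exp (-(t*σ2))) * ((I ω + σ2)^n * Real.exp (-(t * I ω))) := by
    intro ω
    simp only [hφ]
    rw [Finset.mul_sum]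
    refine Finset.sum_congr rfl fun n _ => ?_
    have h5 : -(t*(I ω+σ2)) = -(t * I ω) + -(t*σ2) := by ring
    rw [h5, Real.exp_add, mul_pow]
    ring
  simp_rw [hφexp]
  rw [integral_finset_sum _ (fun n _ => (hψint n).const_mul _)]
  refine Finset.sum_congr rfl fun n _ => ?_
  rw [integral_const_mul]
  -- Step 5: expand the inner integral binomially
  have heq2 : (fun ω => (I ω + σ2)^n * Real.exp (-(t * I ω)))
      = fun ω => ∑ k ∈ Finset.range (n+1),
          (σ2^(n-k) * (n.choose k : ℝ)) * (I ω ^ k * Real.exp (-(t * I ω))) := by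
    funext ω
    rw [add_pow, Finset.sum_mul]
    exact Finset.sum_congr rfl fun k _ => by ring
  rw [heq2, integral_finset_sum _ (fun k _ => (hInt k t ht0).const_mul _)]
  simp_rw [integral_const_mul]
  rw [Finset.mul_sum, Finset.mul_sum]
  refine Finset.sum_congr rfl fun k hk => ?_
  have hkn : k ≤ n := Nat.lt_succ_iff.mp (Finset.mem_range.mp hk)
  rw [hLderiv k t ht0]
  have h6 : ((-1:ℝ))^(n-k) * ((-1:ℝ))^k = (-1:ℝ)^n := by
    rw [← pow_add, Nat.sub_add_cancel hkn]
  have h7 : ((-1:ℝ))^n * ((-1:ℝ))^n = 1 := by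
    rw [← pow_add, ← two_mul, pow_mul]; norm_num
  have h8 : (-1:ℝ)^n * ((-1:ℝ)^(n-k) * (-1:ℝ)^k) = 1 := by rw [h6, h7]
  rw [show (-t) = (-1:ℝ)*t from by ring, show (-σ2) = (-1:ℝ)*σ2 from by ring,
    mul_pow, mul_pow]
  linear_combination (-(t^n * σ2^(n-k) * Real.exp (-(t*σ2)) * (n.choose k : ℝ) / (n.factorial:ℝ)
    * (∫ ω, I ω ^ k * Real.exp (-(t * I ω)) ∂P))) * h8
end
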